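/- Let w̃ ∈ W̃ and let A, A' be distinct Weyl chambers having a common face H_A = H_{A'} contained in a hyperplane H ∈ 𝔥. Define f_{w̃}: V → ℝ by f_{w̃}(v) = ‖w̃(v) − v‖². Let h be a point of the common face H_A and let v ∈ H^⊥ be such that h − εv ∈ A for all sufficiently small ε > 0. If ℓ(w̃_{A'}) = ℓ(w̃_A) + 2, then the directional derivative D_v f_{w̃}(h) = lim_{t→0} (f_{w̃}(h + tv) − f_{w̃}(h))/t is strictly positive. -/

import Mathlib

open SemidirectProduct Set

section

variable {B W : Type*} [Group W]

/-- The extended group `W̃ = ⟨δ⟩ ⋉ W`. -/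
abbrev Wtilde (δ : MulAut W) := W ⋊[(Subgroup.zpowers δ).subtype] ↥(Subgroup.zpowers δ)

variable {M : CoxeterMatrix B} {δ : MulAut W} (cs : CoxeterSystem M W)

/-- The length function on `W̃`, extended from `W` by `ℓ(δ^i w) = ℓ(w)`. -/
noncomputable def tlen (x : Wtilde δ) : ℕ :=
  cs.length (((x.right : MulAut W))⁻¹ x.left)

/-- One step of conjugation by a simple reflection: `w̃ →_s w̃'`. -/
def cstep (x y : Wtilde δ) : Prop :=
  ∃ i : B, y = inl (cs.simple i) * x * inl (cs.simple i) ∧ tlen cs y ≤ tlen cs x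

variable {V : Type*} [NormedAddCommGroup V] [InnerProductSpace ℝ V] [FiniteDimensional ℝ V]
variable (ρ : Wtilde δ →* (V ≃ₗᵢ[ℝ] V))

/-- The set `𝔥` of hyperplanes of `V` whose orthogonal reflection is realized by an
element of `W`. -/
noncomputable def mirrors : Set (Submodule ℝ V) :=
  {H | Module.finrank ℝ H + 1 = Module.finrank ℝ V ∧
    ∃ w : W, ρ (inl w) = H.reflection}

/-- The complement of the union of all the reflecting hyperplanes. -/
def chamberDom : Set V := {v | ∀ H ∈ mirrors ρ, v ∉ H}

/-- A Weyl chamber: a connected component of the complement of the mirrors. -/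
def IsChamber (A : Set V) : Prop :=
  ∃ v ∈ chamberDom ρ, A = connectedComponentIn (chamberDom ρ) v

/-- The hyperplane `H` separates `a` and `b`: the segment from `a` to `b` meets `H`. -/
def SepPts (H : Submodule ℝ V) (a b : V) : Prop := ∃ x ∈ segment ℝ a b, x ∈ H

/-- The set `𝔥(A, A')` of reflecting hyperplanes separating `A` and `A'`. -/
noncomputable def sepSet (A A' : Set V) : Set (Submodule ℝ V) :=
  {H | H ∈ mirrors ρ ∧ ∀ a ∈ A, ∀ b ∈ A', SepPts H a b}

/-- `v` is a regular point of the convex set `K`: every reflecting hyperplane through `v`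
contains `K`. -/
def IsRegPt (K : Set V) (v : V) : Prop :=
  v ∈ K ∧ ∀ H ∈ mirrors ρ, v ∈ H → K ⊆ (H : Set V)

/-- The submodule `V^W` of `W`-fixed points. -/
def fixedW : Submodule ℝ V where
  carrier := {v | ∀ w : W, ρ (inl w) v = v}
  add_mem' := by
    intro a b ha hb w
    simp only [map_add, ha w, hb w]
  zero_mem' := by
    intro w
    simp
  smul_mem' := by
    intro c a ha w
    simp only [map_smul, ha w]

/-- The "eigenspace" `V^θ_{w̃} = {v | w̃ v + w̃⁻¹ v = 2 cos θ · v}`. -/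
def eigSp (x : Wtilde δ) (θ : ℝ) : Submodule ℝ V where
  carrier := {v | ρ x v + ρ x⁻¹ v = (2 * Real.cos θ) • v}
  add_mem' := by
    intro a b ha hb
    simp only [Set.mem_setOf_eq, map_add] at *
    rw [smul_add, ← ha, ← hb]
    abel
  zero_mem' := by simp
  smul_mem' := by
    intro c a ha
    simp only [Set.mem_setOf_eq, map_smul] at *
    rw [← smul_add, ha, smul_comm]

/-- `V_{w̃} = V^{θ₀}_{w̃} ∩ (V^W)^⊥`. -/
noncomputable def Vmin (x : Wtilde δ) (θ₀ : ℝ) : Submodule ℝ V :=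
  eigSp ρ x θ₀ ⊓ (fixedW ρ)ᗮ

/-- The complement of the union of the mirrors containing `K`
(whose connected components house the chambers adapted to `K`). -/
def chamberDomK (K : Set V) : Set V :=
  {v | ∀ H ∈ mirrors ρ, K ⊆ (H : Set V) → v ∉ H}

/-- The face of (the chamber) `A` in the hyperplane `H`: the interior, in `H`, of `H ∩ Ā`. -/
def faceIn (H : Submodule ℝ V) (A : Set V) : Set V :=
  Subtype.val '' (interior {h : H | (h : V) ∈ closure A})

/-- The subgroup `W_K` of `W` generated by the reflections in the mirrors containing `K`. -/
noncomputable def WKsub (K : Set V) : Subgroup W :=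
  Subgroup.closure {w : W | ∃ H ∈ mirrors ρ, K ⊆ (H : Set V) ∧ ρ (inl w) = H.reflection}

end

section Helpers

open Module

variable {V : Type*} [NormedAddCommGroup V] [InnerProductSpace ℝ V] [FiniteDimensional ℝ V]

lemma mem_iff_inner_eq_zero (K : Submodule ℝ V) (hK : finrank ℝ K + 1 = finrank ℝ V)
    {n : V} (hn : n ∈ Kᗮ) (hn0 : n ≠ 0) (u : V) : u ∈ K ↔ inner ℝ n u = (0:ℝ) := by
  classical
  set f : V →ₗ[ℝ] ℝ :=
    { toFun := fun u => (inner ℝ n u : ℝ)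
      map_add' := fun a b => inner_add_right n a b
      map_smul' := fun c a => real_inner_smul_right n a c } with hf
  have hle : K ≤ LinearMap.ker f := by
    intro w hw
    simpa [hf, LinearMap.mem_ker] using
      real_inner_comm w n ▸ (Submodule.mem_orthogonal K n).mp hn w hw
  have hfne : f ≠ 0 := by
    intro h
    apply hn0
    have : (inner ℝ n n : ℝ) = 0 := by
      have := congrArg (fun g => g n) h; simpa [hf] using this
    exact inner_self_eq_zero.mp this
  have hrange : finrank ℝ (LinearMap.range f) = 1 := by
    have h1 : LinearMap.range f ≠ ⊥ := by
      simpa [LinearMap.range_eq_bot] using hfne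
    have h2 : finrank ℝ (LinearMap.range f) ≤ 1 := by
      simpa using (LinearMap.range f).finrank_le
    have h3 : 0 < finrank ℝ (LinearMap.range f) := by
      rw [Module.finrank_pos_iff]
      exact Submodule.nontrivial_iff_ne_bot.mpr h1
    omega
  have hker : finrank ℝ (LinearMap.ker f) = finrank ℝ K := by
    have := LinearMap.finrank_range_add_finrank_ker f
    omega
  have : K = LinearMap.ker f := Submodule.eq_of_le_of_finrank_eq hle hker.symm
  rw [this]; simp [hf, LinearMap.mem_ker]

lemma exists_zero_on_segment {φ : V → ℝ} (hφ : Continuous φ) {a b : V}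
    (ha : φ a ≤ 0) (hb : 0 ≤ φ b) : ∃ p ∈ segment ℝ a b, φ p = 0 := by
  have hseg : IsPreconnected (segment ℝ a b) := (convex_segment a b).isPreconnected
  exact hseg.intermediate_value₂ (left_mem_segment ℝ a b) (right_mem_segment ℝ a b)
    hφ.continuousOn continuousOn_const ha hb

lemma all_neg_of_preconnected {s : Set V} (hs : IsPreconnected s) {φ : V → ℝ}
    (hφ : Continuous φ) (h0 : ∀ u ∈ s, φ u ≠ 0) {b₀ : V} (hb₀ : b₀ ∈ s) (hneg : φ b₀ < 0) :
    ∀ b ∈ s, φ b < 0 := by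
  intro b hb
  rcases lt_or_ge (φ b) 0 with h | h
  · exact h
  obtain ⟨p, hp, hp0⟩ := hs.intermediate_value₂ hb₀ hb hφ.continuousOn continuousOn_const hneg.le h
  exact absurd hp0 (h0 p hp)

lemma sign_dichotomy {s : Set V} (hs : IsPreconnected s) {φ : V → ℝ}
    (hφ : Continuous φ) (h0 : ∀ u ∈ s, φ u ≠ 0) :
    (∀ b ∈ s, φ b < 0) ∨ (∀ b ∈ s, 0 < φ b) := by
  rcases s.eq_empty_or_nonempty with rfl | ⟨b₀, hb₀⟩
  · left; simp
  rcases lt_or_gt_of_ne (h0 b₀ hb₀) with h | h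
  · left; exact all_neg_of_preconnected hs hφ h0 hb₀ h
  · right
    intro b hb
    have := all_neg_of_preconnected hs hφ.neg
      (fun u hu => by simpa using h0 u hu) hb₀ (by simpa using h) b hb
    simpa using this

lemma all_neg_of_closure_pt {s : Set V} (hs : IsPreconnected s) {φ : V → ℝ}
    (hφ : Continuous φ) (h0 : ∀ u ∈ s, φ u ≠ 0) {p : V} (hp : p ∈ closure s) (hp0 : φ p < 0) :
    ∀ b ∈ s, φ b < 0 := by
  rcases sign_dichotomy hs hφ h0 with h | h
  · exact h
  · exfalso
    have hcl : closure s ⊆ {u | 0 ≤ φ u} :=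
      closure_minimal (fun u hu => (h u hu).le) (isClosed_le continuous_const hφ)
    exact absurd (hcl hp) (by simpa using hp0)

lemma neg_closure_le {s : Set V} {φ : V → ℝ} (hφ : Continuous φ)
    (h : ∀ b ∈ s, φ b < 0) {p : V} (hp : p ∈ closure s) : φ p ≤ 0 := by
  have hcl : closure s ⊆ {u | φ u ≤ 0} :=
    closure_minimal (fun u hu => (h u hu).le) (isClosed_le hφ continuous_const)
  exact hcl hp

lemma pos_closure_ge {s : Set V} {φ : V → ℝ} (hφ : Continuous φ)
    (h : ∀ b ∈ s, 0 < φ b) {p : V} (hp : p ∈ closure s) : 0 ≤ φ p := by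
  have hcl : closure s ⊆ {u | 0 ≤ φ u} :=
    closure_minimal (fun u hu => (h u hu).le) (isClosed_le continuous_const hφ)
  exact hcl hp

end Helpers

section Helpers2

set_option linter.unusedSectionVars false

open Module SemidirectProduct

variable {B W : Type*} [Group W] {M : CoxeterMatrix B} {δ : MulAut W}
variable {V : Type*} [NormedAddCommGroup V] [InnerProductSpace ℝ V] [FiniteDimensional ℝ V]
variable (ρ : Wtilde δ →* (V ≃ₗᵢ[ℝ] V))

lemma conj_inl (y : Wtilde δ) (w : W) : ∃ w' : W, y * inl w * y⁻¹ = inl w' := by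
  refine ⟨(y * inl w * y⁻¹).left, ?_⟩
  have hr : (y * inl w * y⁻¹).right = 1 := by
    simp
  conv_lhs => rw [← inl_left_mul_inr_right (y * inl w * y⁻¹)]
  rw [hr]
  simp

lemma rho_inv_apply (y : Wtilde δ) (u : V) : ρ y⁻¹ (ρ y u) = u := by
  simp

lemma rho_apply_inv (y : Wtilde δ) (u : V) : ρ y (ρ y⁻¹ u) = u := by
  simp

lemma mirrors_map {K : Submodule ℝ V} (hK : K ∈ mirrors ρ) (y : Wtilde δ) :
    K.map (((ρ y).toLinearEquiv : V →ₗ[ℝ] V)) ∈ mirrors ρ := by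
  obtain ⟨hrk, w, hw⟩ := hK
  constructor
  · rw [LinearEquiv.finrank_map_eq]
    exact hrk
  · obtain ⟨w', hw'⟩ := conj_inl y w
    refine ⟨w', ?_⟩
    rw [← hw']
    rw [Submodule.reflection_map (ρ y) K]
    ext u
    simp only [map_mul, hw]
    have h1 : ρ (y⁻¹) = (ρ y)⁻¹ := map_inv ρ y
    simp [h1, LinearIsometryEquiv.trans_apply]

end Helpers2

section Helpers3

set_option linter.unusedSectionVars false

open Module SemidirectProduct

variable {B W : Type*} [Group W] {M : CoxeterMatrix B} {δ : MulAut W}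
variable {V : Type*} [NormedAddCommGroup V] [InnerProductSpace ℝ V] [FiniteDimensional ℝ V]
variable (ρ : Wtilde δ →* (V ≃ₗᵢ[ℝ] V))

lemma reflection_inj {K K' : Submodule ℝ V} (h : (K.reflection : V ≃ₗᵢ[ℝ] V) = K'.reflection) :
    K = K' := by
  ext u
  constructor
  · intro hu
    rw [← Submodule.reflection_eq_self_iff (K := K'), ← h]
    exact Submodule.reflection_mem_subspace_eq_self hu
  · intro hu
    rw [← Submodule.reflection_eq_self_iff (K := K), h]
    exact Submodule.reflection_mem_subspace_eq_self hu

lemma mirrors_finite [Finite W] : (mirrors ρ).Finite := by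
  have hfin : (Set.range fun w : W => ρ (inl w)).Finite := Set.finite_range _
  have hsub : mirrors ρ ⊆
      (fun K : Submodule ℝ V => (K.reflection : V ≃ₗᵢ[ℝ] V)) ⁻¹' (Set.range fun w : W => ρ (inl w)) := by
    rintro K ⟨-, w, hw⟩
    exact ⟨w, hw⟩
  exact ((hfin.preimage fun a _ b _ hab => reflection_inj hab).subset hsub)

lemma chamberDom_map (y : Wtilde δ) {u : V} (hu : u ∈ chamberDom ρ) : ρ y u ∈ chamberDom ρ := by
  intro K hK hmem
  have hK' : K.map (((ρ y⁻¹).toLinearEquiv : V →ₗ[ℝ] V)) ∈ mirrors ρ := mirrors_map ρ hK y⁻¹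
  refine hu _ hK' ?_
  exact Submodule.mem_map.mpr ⟨ρ y u, hmem, rho_inv_apply ρ y u⟩

lemma chamber_subset {A : Set V} (hA : IsChamber ρ A) : A ⊆ chamberDom ρ := by
  obtain ⟨v₀, hv₀, rfl⟩ := hA
  exact connectedComponentIn_subset _ _

lemma chamber_nonempty {A : Set V} (hA : IsChamber ρ A) : A.Nonempty := by
  obtain ⟨v₀, hv₀, rfl⟩ := hA
  exact ⟨v₀, mem_connectedComponentIn hv₀⟩

lemma chamber_preconnected {A : Set V} (hA : IsChamber ρ A) : IsPreconnected A := by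
  obtain ⟨v₀, hv₀, rfl⟩ := hA
  exact isPreconnected_connectedComponentIn

lemma faceIn_subset_closure {K : Submodule ℝ V} {A : Set V} : faceIn K A ⊆ closure A := by
  rintro u ⟨p, hp, rfl⟩
  have h2 : p ∈ {q : ↥K | (q : V) ∈ closure A} := interior_subset hp
  exact h2

lemma faceIn_subset_mirror {K : Submodule ℝ V} {A : Set V} : faceIn K A ⊆ (K : Set V) := by
  rintro u ⟨p, hp, rfl⟩
  exact p.2

/-- A point of the (relatively open) face of a chamber `A` in the mirror `H`
lies on no mirror other than `H`. -/
lemma face_only_mirror {A : Set V} (hA : IsChamber ρ A) {H : Submodule ℝ V}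
    (hH : H ∈ mirrors ρ) {h : V} (hh : h ∈ faceIn H A) {K : Submodule ℝ V} (hK : K ∈ mirrors ρ)
    (hKH : K ≠ H) : h ∉ K := by
  intro hcon
  -- a normal vector for K
  obtain ⟨n, hn, hn0⟩ : ∃ n, n ∈ Kᗮ ∧ n ≠ 0 := by
    apply Submodule.exists_mem_ne_zero_of_ne_bot
    intro hbot
    have h1 := Submodule.finrank_add_finrank_orthogonal (K := K)
    have h2 := hK.1
    rw [hbot] at h1
    simp at h1
    omega
  have hmem : ∀ u : V, u ∈ K ↔ inner ℝ n u = (0:ℝ) := mem_iff_inner_eq_zero K hK.1 hn hn0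
  set φ : V → ℝ := fun u => inner ℝ n u with hφdef
  have hφ : Continuous φ := continuous_const.inner continuous_id
  have h0 : ∀ u ∈ A, φ u ≠ 0 := by
    intro u hu hu0
    exact chamber_subset ρ hA hu K hK ((hmem u).mpr hu0)
  -- there is a vector of H on which φ does not vanish
  obtain ⟨z, hzH, hz0⟩ : ∃ z : V, z ∈ H ∧ φ z ≠ 0 := by
    by_contra hcon2
    push_neg at hcon2
    have hle : H ≤ K := fun u hu => (hmem u).mpr (hcon2 u hu)
    have h2 := hK.1
    have h3 := hH.1
    exact hKH (Submodule.eq_of_le_of_finrank_eq hle (by omega)).symm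
  -- the interior point
  obtain ⟨p, hp, hpe⟩ := hh
  set zH : ↥H := ⟨z, hzH⟩ with hzHdef
  have hg : Continuous fun t : ℝ => p + t • zH := by continuity
  have hnhds : (fun t : ℝ => p + t • zH) ⁻¹' interior {q : ↥H | (q : V) ∈ closure A}
      ∈ nhds (0 : ℝ) := by
    apply (isOpen_interior.preimage hg).mem_nhds
    simpa using hp
  obtain ⟨ε, hε, hball⟩ := Metric.mem_nhds_iff.1 hnhds
  have hmemball : ∀ t : ℝ, |t| < ε → ((p + t • zH : ↥H) : V) ∈ closure A := by
    intro t ht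
    have h1 : (p + t • zH) ∈ interior {q : ↥H | (q : V) ∈ closure A} :=
      hball (by simpa [Real.dist_eq] using ht)
    have h2 : (p + t • zH) ∈ {q : ↥H | (q : V) ∈ closure A} := interior_subset h1
    exact h2
  have hφh : φ h = 0 := (hmem h).mp hcon
  have hval : ∀ t : ℝ, φ ((p + t • zH : ↥H) : V) = t * φ z := by
    intro t
    have h1 : ((p + t • zH : ↥H) : V) = h + t • z := by
      push_cast
      rw [hpe]
    rw [h1, hφdef]
    simp only [inner_add_right, real_inner_smul_right]
    have h2 : inner ℝ n h = (0:ℝ) := hφh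
    rw [h2]
    ring
  have habs : |ε/2| < ε ∧ |-(ε/2)| < ε := by
    constructor <;> rw [abs_lt] <;> constructor <;> linarith
  have hbp := hmemball (ε/2) habs.1
  have hbm := hmemball (-(ε/2)) habs.2
  rcases sign_dichotomy (chamber_preconnected ρ hA) hφ h0 with hA1 | hA1
  · have h1 := neg_closure_le hφ hA1 hbp
    have h2 := neg_closure_le hφ hA1 hbm
    rw [hval] at h1 h2
    rcases lt_or_gt_of_ne hz0 with h | h <;> nlinarith
  · have h1 := pos_closure_ge hφ hA1 hbp
    have h2 := pos_closure_ge hφ hA1 hbm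
    rw [hval] at h1 h2
    rcases lt_or_gt_of_ne hz0 with h | h <;> nlinarith

end Helpers3

section Helpers4

set_option linter.unusedSectionVars false

open Module SemidirectProduct

variable {B W : Type*} [Group W] {M : CoxeterMatrix B} {δ : MulAut W}
variable {V : Type*} [NormedAddCommGroup V] [InnerProductSpace ℝ V] [FiniteDimensional ℝ V]
variable (ρ : Wtilde δ →* (V ≃ₗᵢ[ℝ] V))

lemma all_pos_of_closure_pt {s : Set V} (hs : IsPreconnected s) {φ : V → ℝ}
    (hφ : Continuous φ) (h0 : ∀ u ∈ s, φ u ≠ 0) {p : V} (hp : p ∈ closure s) (hp0 : 0 < φ p) :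
    ∀ b ∈ s, 0 < φ b := by
  intro b hb
  have := all_neg_of_closure_pt hs hφ.neg (fun u hu => by simpa using h0 u hu) hp
    (by simpa using hp0) b hb
  simpa using this

lemma inner_isLinearMap (n : V) : IsLinearMap ℝ (fun u : V => (inner ℝ n u : ℝ)) :=
  ⟨fun a b => inner_add_right n a b, fun c a => real_inner_smul_right n a c⟩

lemma sepPts_symm {K : Submodule ℝ V} {a b : V} (h : SepPts K a b) : SepPts K b a := by
  obtain ⟨p, hp, hpK⟩ := h
  exact ⟨p, segment_symm ℝ a b ▸ hp, hpK⟩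

lemma not_sepPts_of_neg {K : Submodule ℝ V} {n : V}
    (hmem : ∀ u : V, u ∈ K ↔ inner ℝ n u = (0:ℝ)) {a b : V}
    (ha : inner ℝ n a < (0:ℝ)) (hb : inner ℝ n b < (0:ℝ)) : ¬ SepPts K a b := by
  rintro ⟨p, hp, hpK⟩
  have hconv : segment ℝ a b ⊆ {u : V | inner ℝ n u < (0:ℝ)} :=
    (convex_halfSpace_lt (inner_isLinearMap n) 0).segment_subset ha hb
  exact absurd ((hmem p).mp hpK) (ne_of_lt (hconv hp))

lemma not_sepPts_of_pos {K : Submodule ℝ V} {n : V}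
    (hmem : ∀ u : V, u ∈ K ↔ inner ℝ n u = (0:ℝ)) {a b : V}
    (ha : (0:ℝ) < inner ℝ n a) (hb : (0:ℝ) < inner ℝ n b) : ¬ SepPts K a b := by
  rintro ⟨p, hp, hpK⟩
  have hconv : segment ℝ a b ⊆ {u : V | (0:ℝ) < inner ℝ n u} :=
    (convex_halfSpace_gt (inner_isLinearMap n) 0).segment_subset ha hb
  exact absurd ((hmem p).mp hpK) (ne_of_gt (hconv hp))

lemma sepPts_of_signs {K : Submodule ℝ V} {n : V}
    (hmem : ∀ u : V, u ∈ K ↔ inner ℝ n u = (0:ℝ)) {a b : V}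
    (ha : inner ℝ n a ≤ (0:ℝ)) (hb : (0:ℝ) ≤ inner ℝ n b) : SepPts K a b := by
  obtain ⟨p, hp, h0⟩ := exists_zero_on_segment (φ := fun u : V => (inner ℝ n u : ℝ))
    (continuous_const.inner continuous_id) ha hb
  exact ⟨p, hp, (hmem p).mpr h0⟩

lemma sepPts_map (e : V ≃ₗᵢ[ℝ] V) {K : Submodule ℝ V} {a b : V} (h : SepPts K a b) :
    SepPts (K.map ((e.toLinearEquiv : V →ₗ[ℝ] V))) (e a) (e b) := by
  obtain ⟨p, hp, hpK⟩ := h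
  refine ⟨e p, ?_, Submodule.mem_map.mpr ⟨p, hpK, rfl⟩⟩
  have himg := image_segment (𝕜 := ℝ) ((e.toLinearEquiv : V →ₗ[ℝ] V).toAffineMap) a b
  have : e p ∈ (⇑((e.toLinearEquiv : V →ₗ[ℝ] V).toAffineMap)) '' segment ℝ a b := ⟨p, hp, rfl⟩
  rw [himg] at this
  simpa using this

lemma map_inv_map (y : Wtilde δ) (K : Submodule ℝ V) :
    (K.map (((ρ y⁻¹).toLinearEquiv : V →ₗ[ℝ] V))).map (((ρ y).toLinearEquiv : V →ₗ[ℝ] V)) = K := by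
  ext u
  simp only [Submodule.mem_map, LinearEquiv.coe_coe, LinearIsometryEquiv.coe_toLinearEquiv]
  constructor
  · rintro ⟨z, ⟨w, hw, rfl⟩, rfl⟩
    rw [rho_apply_inv]
    exact hw
  · intro hu
    exact ⟨ρ y⁻¹ u, ⟨u, hu, rfl⟩, rho_apply_inv ρ y u⟩

lemma mirror_normal {K : Submodule ℝ V} (hK : K ∈ mirrors ρ) :
    ∃ n : V, n ≠ 0 ∧ ∀ u : V, u ∈ K ↔ inner ℝ n u = (0:ℝ) := by
  obtain ⟨n, hn, hn0⟩ : ∃ n, n ∈ Kᗮ ∧ n ≠ 0 := by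
    apply Submodule.exists_mem_ne_zero_of_ne_bot
    intro hbot
    have h1 := Submodule.finrank_add_finrank_orthogonal (K := K)
    have h2 := hK.1
    rw [hbot] at h1
    simp at h1
    omega
  exact ⟨n, hn0, mem_iff_inner_eq_zero K hK.1 hn hn0⟩

lemma closure_map (y : Wtilde δ) (s : Set V) {u : V} (hu : u ∈ closure s) :
    ρ y u ∈ closure (⇑(ρ y) '' s) := by
  have himg : ⇑(ρ y) '' closure s = closure (⇑(ρ y) '' s) := (ρ y).toHomeomorph.image_closure s
  rw [← himg]
  exact ⟨u, hu, rfl⟩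

end Helpers4


open SemidirectProduct in
/-- if `A, A'` are distinct Weyl chambers with a common face contained in the
hyperplane `H ∈ 𝔥`, `h` is a point of the common face, `v ∈ H^⊥` points out of `A` at `h`,
and `ℓ(w̃_{A'}) = ℓ(w̃_A) + 2`, then the directional derivative of
`f_{w̃}(u) = ‖w̃ u − u‖²` at `h` in the direction `v` is strictly positive. -/
theorem stmt_4 {B W : Type*} [Group W] [Finite W] {M : CoxeterMatrix B}
    (cs : CoxeterSystem M W) (δ : MulAut W)
    (hδ : (δ : W ≃* W) '' (Set.range cs.simple) = Set.range cs.simple)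
    {V : Type*} [NormedAddCommGroup V] [InnerProductSpace ℝ V] [FiniteDimensional ℝ V]
    (ρ : Wtilde δ →* (V ≃ₗᵢ[ℝ] V)) (hρ : Function.Injective ρ)
    (hrefl : ∀ i : B, ∃ H : Submodule ℝ V, Module.finrank ℝ H + 1 = Module.finrank ℝ V ∧
      ρ (inl (cs.simple i)) = H.reflection)
    (C : Set V) (hC : IsChamber ρ C)
    -- `ℓ(w̃_A) = #𝔥(A, w̃(A))` for every chamber `A = z(C)` (part of the context)
    (hlen : ∀ (z : W) (x : Wtilde δ),
      tlen cs ((inl z)⁻¹ * x * inl z) =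
        (sepSet ρ (ρ (inl z) '' C) (ρ x '' (ρ (inl z) '' C))).ncard)
    -- the element `w̃` and the chambers `A`, `A'` with `A = x_A(C)`, `A' = x_{A'}(C)`
    (x : Wtilde δ) (A A' : Set V) (hA : IsChamber ρ A) (hA' : IsChamber ρ A')
    (hAA' : A ≠ A')
    (xA xA' : W) (hxA : ρ (inl xA) '' C = A) (hxA' : ρ (inl xA') '' C = A')
    -- `H ∈ 𝔥` is a common wall of `A` and `A'`, with common face `H_A = H_{A'}`
    (H : Submodule ℝ V) (hH : H ∈ mirrors ρ)
    (hwallA : Submodule.span ℝ (faceIn H A) = H)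
    (hwallA' : Submodule.span ℝ (faceIn H A') = H)
    (hface : faceIn H A = faceIn H A')
    -- `h` is a point of the common face and `v ∈ H^⊥` points away from `A`
    (h : V) (hh : h ∈ faceIn H A)
    (v : V) (hv : v ∈ Hᗮ)
    (hvA : ∃ ε₀ > (0:ℝ), ∀ ε : ℝ, 0 < ε → ε < ε₀ → h - ε • v ∈ A)
    -- the length assumption `ℓ(w̃_{A'}) = ℓ(w̃_A) + 2`
    (hlen2 : tlen cs ((inl xA')⁻¹ * x * inl xA') = tlen cs ((inl xA)⁻¹ * x * inl xA) + 2) :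
    0 < deriv (fun t : ℝ => ‖ρ x (h + t • v) - (h + t • v)‖ ^ 2) 0 := by
  classical
  -- basic facts about `h` and `v`
  have hhH : h ∈ H := faceIn_subset_mirror hh
  have hhclA : h ∈ closure A := faceIn_subset_closure hh
  have hhclA' : h ∈ closure A' := faceIn_subset_closure (hface ▸ hh)
  obtain ⟨ε₀, hε₀, hεA⟩ := hvA
  have hv0 : v ≠ 0 := by
    rintro rfl
    have h1 : h ∈ A := by simpa using hεA (ε₀ / 2) (by linarith) (by linarith)
    exact chamber_subset ρ hA h1 H hH hhH
  have hmemH : ∀ u : V, u ∈ H ↔ inner ℝ v u = (0:ℝ) := fun u =>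
    mem_iff_inner_eq_zero H hH.1 hv hv0 u
  set φ : V → ℝ := fun u => inner ℝ v u with hφdef
  have hφc : Continuous φ := continuous_const.inner continuous_id
  have hφh : φ h = 0 := (hmemH h).mp hhH
  -- the two separating sets
  have hS := hlen xA x
  have hS' := hlen xA' x
  rw [hxA] at hS
  rw [hxA'] at hS'
  set S := sepSet ρ A (⇑(ρ x) '' A) with hSdef
  set S' := sepSet ρ A' (⇑(ρ x) '' A') with hS'def
  have hcard : S'.ncard = S.ncard + 2 := by omega
  -- `h` lies on no mirror except `H`
  have honly : ∀ K ∈ mirrors ρ, K ≠ H → h ∉ K := fun K hK hne =>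
    face_only_mirror ρ hA hH hh hK hne
  set Hx : Submodule ℝ V := H.map (((ρ x).toLinearEquiv : V →ₗ[ℝ] V)) with hHxdef
  have hHx : Hx ∈ mirrors ρ := mirrors_map ρ hH x
  -- chamber images
  have himgsub : ∀ (y : Wtilde δ) (T : Set V), T ⊆ chamberDom ρ →
      ⇑(ρ y) '' T ⊆ chamberDom ρ := by
    rintro y T hT _ ⟨u, hu, rfl⟩
    exact chamberDom_map ρ y (hT hu)
  have himgpre : ∀ (y : Wtilde δ) (T : Set V), IsPreconnected T →
      IsPreconnected (⇑(ρ y) '' T) := fun y T hT => hT.image _ (ρ y).continuous.continuousOn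
  have hAdom := chamber_subset ρ hA
  have hA'dom := chamber_subset ρ hA'
  have hApre := chamber_preconnected ρ hA
  have hA'pre := chamber_preconnected ρ hA'
  -- Step 1: S' ⊆ {H, Hx} ∪ S
  have hsub : S' ⊆ insert H (insert Hx S) := by
    intro K hK'
    by_cases hKH : K = H
    · exact Or.inl hKH
    right
    by_cases hKHx : K = Hx
    · exact Or.inl hKHx
    right
    obtain ⟨hKm, hKsep⟩ := hK'
    obtain ⟨n, hn0, hmemK⟩ := mirror_normal ρ hKm
    set ψ : V → ℝ := fun u => inner ℝ n u with hψdef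
    have hψc : Continuous ψ := continuous_const.inner continuous_id
    have hzero : ∀ T : Set V, T ⊆ chamberDom ρ → ∀ u ∈ T, ψ u ≠ 0 := by
      intro T hT u hu h0
      exact hT hu K hKm ((hmemK u).mpr h0)
    have hhK : ψ h ≠ 0 := fun h0 => honly K hKm hKH ((hmemK h).mpr h0)
    have hxhK : ψ (ρ x h) ≠ 0 := by
      intro h0
      have hmb : ρ x h ∈ K := (hmemK _).mpr h0
      have hmm : h ∈ K.map (((ρ x⁻¹).toLinearEquiv : V →ₗ[ℝ] V)) :=
        Submodule.mem_map.mpr ⟨ρ x h, hmb, rho_inv_apply ρ x h⟩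
      have hKK : K.map (((ρ x⁻¹).toLinearEquiv : V →ₗ[ℝ] V)) = H := by
        by_contra hne
        exact honly _ (mirrors_map ρ hKm x⁻¹) hne hmm
      apply hKHx
      have h2 := map_inv_map ρ x K
      rw [hKK] at h2
      exact h2.symm
    obtain ⟨a', ha'⟩ := chamber_nonempty ρ hA'
    have hsep' : SepPts K a' (ρ x a') := hKsep a' ha' _ ⟨a', ha', rfl⟩
    refine ⟨hKm, ?_⟩
    have hclxA : ρ x h ∈ closure (⇑(ρ x) '' A) := closure_map ρ x A hhclA
    have hclxA' : ρ x h ∈ closure (⇑(ρ x) '' A') := closure_map ρ x A' hhclA'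
    rcases lt_or_gt_of_ne hhK with hs1 | hs1 <;> rcases lt_or_gt_of_ne hxhK with hs2 | hs2
    · exfalso
      have hn1 : ∀ u ∈ A', ψ u < 0 :=
        all_neg_of_closure_pt hA'pre hψc (hzero A' hA'dom) hhclA' hs1
      have hn2 : ∀ u ∈ ⇑(ρ x) '' A', ψ u < 0 :=
        all_neg_of_closure_pt (himgpre x A' hA'pre) hψc
          (hzero _ (himgsub x A' hA'dom)) hclxA' hs2
      exact not_sepPts_of_neg hmemK (hn1 a' ha') (hn2 _ ⟨a', ha', rfl⟩) hsep'
    · intro a ha b hb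
      have hn1 : ∀ u ∈ A, ψ u < 0 :=
        all_neg_of_closure_pt hApre hψc (hzero A hAdom) hhclA hs1
      have hn2 : ∀ u ∈ ⇑(ρ x) '' A, 0 < ψ u :=
        all_pos_of_closure_pt (himgpre x A hApre) hψc
          (hzero _ (himgsub x A hAdom)) hclxA hs2
      exact sepPts_of_signs hmemK (hn1 a ha).le (hn2 b hb).le
    · intro a ha b hb
      have hn1 : ∀ u ∈ A, 0 < ψ u :=
        all_pos_of_closure_pt hApre hψc (hzero A hAdom) hhclA hs1
      have hn2 : ∀ u ∈ ⇑(ρ x) '' A, ψ u < 0 :=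
        all_neg_of_closure_pt (himgpre x A hApre) hψc
          (hzero _ (himgsub x A hAdom)) hclxA hs2
      exact sepPts_symm (sepPts_of_signs hmemK (hn2 b hb).le (hn1 a ha).le)
    · exfalso
      have hn1 : ∀ u ∈ A', 0 < ψ u :=
        all_pos_of_closure_pt hA'pre hψc (hzero A' hA'dom) hhclA' hs1
      have hn2 : ∀ u ∈ ⇑(ρ x) '' A', 0 < ψ u :=
        all_pos_of_closure_pt (himgpre x A' hA'pre) hψc
          (hzero _ (himgsub x A' hA'dom)) hclxA' hs2
      exact not_sepPts_of_pos hmemK (hn1 a' ha') (hn2 _ ⟨a', ha', rfl⟩) hsep'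
  -- Step 2: cardinality bookkeeping
  have hSfin : S.Finite := (mirrors_finite ρ).subset fun K hK => hK.1
  have hUfin : (insert H (insert Hx S)).Finite := (hSfin.insert _).insert _
  have hle : S.ncard + 2 ≤ (insert H (insert Hx S)).ncard := by
    rw [← hcard]
    exact Set.ncard_le_ncard hsub hUfin
  have hHHx : H ≠ Hx := by
    intro hEq
    have h1 : insert H (insert Hx S) = insert Hx S := by
      rw [hEq, Set.insert_idem]
    have h2 := Set.ncard_insert_le Hx S
    rw [h1] at hle
    omega
  have hHS : H ∉ S := by
    intro hmem
    have h1 : insert H (insert Hx S) = insert Hx S :=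
      Set.insert_eq_self.mpr (Set.mem_insert_iff.mpr (Or.inr hmem))
    have h2 := Set.ncard_insert_le Hx S
    rw [h1] at hle
    omega
  have hHxS : Hx ∉ S := by
    intro hmem
    have h1 : insert H (insert Hx S) = insert H S := by
      rw [Set.insert_eq_self.mpr hmem]
    have h2 := Set.ncard_insert_le H S
    rw [h1] at hle
    omega
  -- Step 3: sign facts for A and its images
  have h0A : ∀ u ∈ A, φ u ≠ 0 := fun u hu h0 => hAdom hu H hH ((hmemH u).mpr h0)
  have hwit : φ (h - (ε₀ / 2) • v) < 0 := by
    have h1 : φ (h - (ε₀ / 2) • v) = φ h - (ε₀ / 2) * inner ℝ v v := by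
      simp [hφdef, inner_sub_right, real_inner_smul_right]
    rw [h1, hφh, real_inner_self_eq_norm_sq]
    have h2 : (0:ℝ) < ‖v‖ ^ 2 := by
      have h3 : (0:ℝ) < ‖v‖ := norm_pos_iff.mpr hv0
      positivity
    nlinarith
  have hANeg : ∀ u ∈ A, φ u < 0 :=
    all_neg_of_preconnected hApre hφc h0A (hεA (ε₀ / 2) (by linarith) (by linarith)) hwit
  -- H does not separate A and ρ x A
  have hHnot : ¬ ∀ a ∈ A, ∀ b ∈ ⇑(ρ x) '' A, SepPts H a b := fun hall => hHS ⟨hH, hall⟩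
  push_neg at hHnot
  obtain ⟨a, ha, b, hb, hnsep⟩ := hHnot
  have h0xA : ∀ u ∈ ⇑(ρ x) '' A, φ u ≠ 0 := fun u hu h0 =>
    himgsub x A hAdom hu H hH ((hmemH u).mpr h0)
  have hxANeg : ∀ u ∈ ⇑(ρ x) '' A, φ u < 0 := by
    rcases lt_or_gt_of_ne (h0xA b hb) with hbneg | hbpos
    · exact all_neg_of_preconnected (himgpre x A hApre) hφc h0xA hb hbneg
    · exact absurd (sepPts_of_signs hmemH (hANeg a ha).le hbpos.le) hnsep
  have hxh_le : φ (ρ x h) ≤ 0 := neg_closure_le hφc hxANeg (closure_map ρ x A hhclA)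
  have hxh_ne : φ (ρ x h) ≠ 0 := by
    intro h0
    have hmb : ρ x h ∈ H := (hmemH _).mpr h0
    have hmm : h ∈ H.map (((ρ x⁻¹).toLinearEquiv : V →ₗ[ℝ] V)) :=
      Submodule.mem_map.mpr ⟨ρ x h, hmb, rho_inv_apply ρ x h⟩
    have heq : H.map (((ρ x⁻¹).toLinearEquiv : V →ₗ[ℝ] V)) = H := by
      by_contra hne
      exact honly _ (mirrors_map ρ hH x⁻¹) hne hmm
    apply hHHx
    have h2 := map_inv_map ρ x H
    rw [heq] at h2
    exact h2.symm
  -- Hx does not separate A and ρ x A : transport by ρ x⁻¹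
  have hHxnot : ¬ ∀ a ∈ A, ∀ b ∈ ⇑(ρ x) '' A, SepPts Hx a b := fun hall => hHxS ⟨hHx, hall⟩
  push_neg at hHxnot
  obtain ⟨a₂, ha₂, b₂, hb₂, hnsep₂⟩ := hHxnot
  obtain ⟨u₂, hu₂, rfl⟩ := hb₂
  have hnsep₂' : ¬ SepPts H (ρ x⁻¹ a₂) u₂ := by
    intro hsep
    have h1 := sepPts_map (ρ x) hsep
    rw [rho_apply_inv] at h1
    exact hnsep₂ h1
  have hinvsub := himgsub x⁻¹ A hAdom
  have hinvpre := himgpre x⁻¹ A hApre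
  have h0inv : ∀ u ∈ ⇑(ρ x⁻¹) '' A, φ u ≠ 0 := fun u hu h0 =>
    hinvsub hu H hH ((hmemH u).mpr h0)
  have hmeminv : ρ x⁻¹ a₂ ∈ ⇑(ρ x⁻¹) '' A := ⟨a₂, ha₂, rfl⟩
  have hinvNeg : ∀ u ∈ ⇑(ρ x⁻¹) '' A, φ u < 0 := by
    rcases lt_or_gt_of_ne (h0inv _ hmeminv) with hneg | hpos
    · exact all_neg_of_preconnected hinvpre hφc h0inv hmeminv hneg
    · exact absurd (sepPts_symm (sepPts_of_signs hmemH (hANeg u₂ hu₂).le hpos.le)) hnsep₂'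
  have hinvh_le : φ (ρ x⁻¹ h) ≤ 0 := neg_closure_le hφc hinvNeg (closure_map ρ x⁻¹ A hhclA)
  have hinvh_ne : φ (ρ x⁻¹ h) ≠ 0 := by
    intro h0
    have hmb : ρ x⁻¹ h ∈ H := (hmemH _).mpr h0
    have hmm : h ∈ Hx := Submodule.mem_map.mpr ⟨ρ x⁻¹ h, hmb, rho_apply_inv ρ x h⟩
    exact honly Hx hHx (Ne.symm hHHx) hmm
  -- Step 4: compute the derivative
  set a0 : V := ρ x h - h with ha0
  set b0 : V := ρ x v - v with hb0
  have hfun : (fun t : ℝ => ‖ρ x (h + t • v) - (h + t • v)‖ ^ 2)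
      = fun t : ℝ => (inner ℝ (a0 + t • b0) (a0 + t • b0) : ℝ) := by
    funext t
    rw [real_inner_self_eq_norm_sq]
    congr 1
    rw [ha0, hb0, smul_sub]
    simp only [map_add, LinearIsometryEquiv.map_smul]
    abel
  have hc : HasDerivAt (fun t : ℝ => a0 + t • b0) b0 0 := by
    simpa using ((hasDerivAt_id (0:ℝ)).smul_const b0).const_add a0
  have hderiv : HasDerivAt (fun t : ℝ => (inner ℝ (a0 + t • b0) (a0 + t • b0) : ℝ))
      ((inner ℝ (a0 + (0:ℝ) • b0) b0 : ℝ) + (inner ℝ b0 (a0 + (0:ℝ) • b0) : ℝ)) 0 :=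
    hc.inner ℝ hc
  have hkey : (inner ℝ a0 b0 : ℝ) = -(φ (ρ x h) + φ (ρ x⁻¹ h)) := by
    rw [ha0, hb0]
    simp only [inner_sub_left, inner_sub_right]
    have e1 : (inner ℝ (ρ x h) (ρ x v) : ℝ) = inner ℝ h v := (ρ x).inner_map_map h v
    have e2 : (inner ℝ h (ρ x v) : ℝ) = inner ℝ (ρ x⁻¹ h) v := by
      have := (ρ x).inner_map_map (ρ x⁻¹ h) v
      rw [rho_apply_inv] at this
      exact this
    have e3 : (inner ℝ h v : ℝ) = 0 := by
      rw [real_inner_comm]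
      exact hφh
    have e4 : (inner ℝ (ρ x h) v : ℝ) = φ (ρ x h) := real_inner_comm _ _
    have e5 : (inner ℝ (ρ x⁻¹ h) v : ℝ) = φ (ρ x⁻¹ h) := real_inner_comm _ _
    rw [e1, e2, e3, e4, e5]
    ring
  have hlt1 : φ (ρ x h) < 0 := lt_of_le_of_ne hxh_le hxh_ne
  have hlt2 : φ (ρ x⁻¹ h) < 0 := lt_of_le_of_ne hinvh_le hinvh_ne
  have hcomm : (inner ℝ b0 a0 : ℝ) = inner ℝ a0 b0 := real_inner_comm _ _
  rw [hfun, hderiv.deriv]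
  simp only [zero_smul, add_zero, hcomm, hkey]
  linarith
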